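/- Euler formula for nonnegative self-adjoint operators (scalar reduction): there exists a constant M > 0 such that for all n ≥ 1, t ≥ 0, and all λ ≥ 0, |(1 + tλ/n)^{-n} - e^{-tλ}| ≤ M/n. -/

import Mathlib

set_option maxHeartbeats 1000000

-- a^n - b^n ≤ n * a^(n-1) * (a - b) for 0 ≤ b ≤ a
lemma aux_pow_sub_pow (a b : ℝ) (hb : 0 ≤ b) (hab : b ≤ a) :
    ∀ n : ℕ, a ^ n - b ^ n ≤ n * a ^ (n - 1) * (a - b) := by
  intro n
  induction n with
  | zero => simp
  | succ m ih =>
    have ha : 0 ≤ a := hb.trans hab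
    have hpow : b ^ m ≤ a ^ m := pow_le_pow_left₀ hb hab m
    have hpm : a ^ m ≤ a ^ m := le_refl _
    have key : a ^ (m + 1) - b ^ (m + 1) ≤ a * (a ^ m - b ^ m) + a ^ m * (a - b) := by
      have hps : a ^ (m + 1) = a * a ^ m := by rw [pow_succ]; ring
      have hps' : b ^ (m + 1) = b * b ^ m := by rw [pow_succ]; ring
      nlinarith [mul_nonneg (sub_nonneg.mpr hpow) (sub_nonneg.mpr hab)]
    have h2 : a * (a ^ m - b ^ m) ≤ a * (m * a ^ (m - 1) * (a - b)) :=
      mul_le_mul_of_nonneg_left (ih) ha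
    have h3 : a * (m * a ^ (m - 1) * (a - b)) ≤ m * a ^ m * (a - b) := by
      rcases Nat.eq_zero_or_pos m with hm | hm
      · subst hm; simp
      · have hh : a * a ^ (m - 1) = a ^ m := by
          rw [← pow_succ']; congr 1; omega
        have : a * (m * a ^ (m - 1) * (a - b)) = m * (a * a ^ (m - 1)) * (a - b) := by ring
        rw [this, hh]
    have : a ^ (m + 1) - b ^ (m + 1) ≤ m * a ^ m * (a - b) + a ^ m * (a - b) := by
      linarith
    calc a ^ (m + 1) - b ^ (m + 1) ≤ m * a ^ m * (a - b) + a ^ m * (a - b) := this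
      _ = (m + 1 : ℕ) * a ^ ((m + 1) - 1) * (a - b) := by push_cast; ring

-- binomial lower bound: choose m 2 * u^2 ≤ (1+u)^m for u ≥ 0
lemma aux_binom (u : ℝ) (hu : 0 ≤ u) (m : ℕ) (hm : 2 ≤ m) :
    (m.choose 2 : ℝ) * u ^ 2 ≤ (1 + u) ^ m := by
  have h := add_pow u 1 m
  have hmem : 2 ∈ Finset.range (m + 1) := Finset.mem_range.mpr (by omega)
  have hle : u ^ 2 * 1 ^ (m - 2) * (m.choose 2 : ℝ) ≤
      ∑ k ∈ Finset.range (m + 1), u ^ k * 1 ^ (m - k) * (m.choose k : ℝ) := by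
    apply Finset.single_le_sum (f := fun k => u ^ k * 1 ^ (m - k) * (m.choose k : ℝ)) _ hmem
    intro i _
    positivity
  rw [← h] at hle
  calc (m.choose 2 : ℝ) * u ^ 2 = u ^ 2 * 1 ^ (m - 2) * (m.choose 2 : ℝ) := by ring
    _ ≤ (u + 1) ^ m := hle
    _ = (1 + u) ^ m := by ring

theorem scalar_euler_estimate :
    ∃ M : ℝ, 0 < M ∧ ∀ n : ℕ, 1 ≤ n → ∀ t : ℝ, 0 ≤ t → ∀ l : ℝ, 0 ≤ l →
      |((1 + t * l / n) ^ n)⁻¹ - Real.exp (-(t * l))| ≤ M / n := by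
  refine ⟨9, by norm_num, ?_⟩
  intro n hn t ht l hl
  set x := t * l with hx
  have hx0 : 0 ≤ x := mul_nonneg ht hl
  have hn0 : (0 : ℝ) < n := by exact_mod_cast hn
  set u := x / n with hu
  have hu0 : 0 ≤ u := div_nonneg hx0 hn0.le
  have h1u : (0:ℝ) < 1 + u := by linarith
  set a := (1 + u)⁻¹ with ha
  set b := Real.exp (-u) with hb
  have ha0 : 0 < a := inv_pos.mpr h1u
  have ha1 : a ≤ 1 := by
    rw [ha]; rw [inv_le_one_iff₀]; right; linarith
  have hba : b ≤ a := by
    rw [hb, ha, Real.exp_neg]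
    apply inv_anti₀ h1u
    linarith [Real.add_one_le_exp u]
  have hb0 : 0 < b := Real.exp_pos _
  -- a - b ≤ u^2
  have hab2 : a - b ≤ u ^ 2 := by
    have h1 : a ≤ 1 - u + u ^ 2 := by
      rw [ha, inv_le_iff_one_le_mul₀ h1u]
      nlinarith [pow_nonneg hu0 3]
    have h2 : 1 - u ≤ b := by
      have := Real.add_one_le_exp (-u); rw [hb]; linarith
    linarith
  -- rewrite goal
  have hrw : ((1 + x / n) ^ n)⁻¹ = a ^ n := by rw [ha, inv_pow, hu]
  have hexp : Real.exp (-x) = b ^ n := by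
    rw [hb, ← Real.exp_nat_mul]
    congr 1
    rw [hu]
    field_simp
  have hDpos : 0 ≤ a ^ n - b ^ n := by
    have := pow_le_pow_left₀ hb0.le hba n; linarith
  have hgoal : |((1 + t * l / n) ^ n)⁻¹ - Real.exp (-(t * l))| = a ^ n - b ^ n := by
    rw [← hx, hrw, hexp, abs_of_nonneg hDpos]
  rw [hgoal]
  -- main bound
  have hkey : a ^ n - b ^ n ≤ n * a ^ (n - 1) * u ^ 2 := by
    calc a ^ n - b ^ n ≤ n * a ^ (n - 1) * (a - b) := aux_pow_sub_pow a b hb0.le hba n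
      _ ≤ n * a ^ (n - 1) * u ^ 2 := by
          apply mul_le_mul_of_nonneg_left hab2
          positivity
  rcases lt_or_ge n 3 with h3 | h3
  · -- n = 1 or 2 : a^n - b^n ≤ 1 ≤ 9/n
    have : a ^ n - b ^ n ≤ 1 := by
      have := pow_le_one₀ ha0.le ha1 (n := n)
      have := pow_nonneg hb0.le n
      linarith
    have h9 : (1 : ℝ) ≤ 9 / n := by
      rw [le_div_iff₀ hn0]
      have : (n : ℝ) ≤ 2 := by exact_mod_cast Nat.lt_succ_iff.mp h3
      linarith
    linarith
  · -- n ≥ 3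
    have hm : 2 ≤ n - 1 := by omega
    have hbin : ((n - 1).choose 2 : ℝ) * u ^ 2 ≤ (1 + u) ^ (n - 1) :=
      aux_binom u hu0 (n - 1) hm
    have hc : ((n - 1).choose 2 : ℝ) = (n - 1 : ℝ) * (n - 2 : ℝ) / 2 := by
      rw [Nat.cast_choose_two]
      rw [Nat.cast_sub (by omega : 1 ≤ n)]
      push_cast
      ring
    -- u^2 * a^(n-1) ≤ 1 / choose
    have hmul : ((n - 1).choose 2 : ℝ) * u ^ 2 * a ^ (n - 1) ≤ 1 := by
      have hpow : (1 + u) ^ (n - 1) * a ^ (n - 1) = 1 := by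
        rw [ha, ← mul_pow, mul_inv_cancel₀ h1u.ne', one_pow]
      calc ((n - 1).choose 2 : ℝ) * u ^ 2 * a ^ (n - 1)
          ≤ (1 + u) ^ (n - 1) * a ^ (n - 1) :=
            mul_le_mul_of_nonneg_right hbin (by positivity)
        _ = 1 := hpow
    have hchoosepos : (0 : ℝ) < ((n - 1).choose 2 : ℝ) := by
      rw [hc]
      have : (3 : ℝ) ≤ n := by exact_mod_cast h3
      nlinarith
    have hfin : (n : ℝ) * a ^ (n - 1) * u ^ 2 ≤ 9 / n := by
      have h1 : u ^ 2 * a ^ (n - 1) ≤ 1 / ((n - 1).choose 2 : ℝ) := by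
        rw [le_div_iff₀ hchoosepos]; linarith [hmul]
      have h2 : (n : ℝ) * (u ^ 2 * a ^ (n - 1)) ≤ n * (1 / ((n - 1).choose 2 : ℝ)) :=
        mul_le_mul_of_nonneg_left h1 hn0.le
      have h4 : (n : ℝ) * (1 / ((n - 1).choose 2 : ℝ)) ≤ 9 / n := by
        have hn3 : (3 : ℝ) ≤ n := by exact_mod_cast h3
        have hpos2 : (0 : ℝ) < ((n : ℝ) - 1) * ((n : ℝ) - 2) / 2 := by nlinarith
        rw [hc, mul_one_div, div_le_div_iff₀ hpos2 hn0]
        nlinarith [sq_nonneg ((n : ℝ) - 3)]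
      calc (n : ℝ) * a ^ (n - 1) * u ^ 2 = n * (u ^ 2 * a ^ (n - 1)) := by ring
        _ ≤ n * (1 / ((n - 1).choose 2 : ℝ)) := h2
        _ ≤ 9 / n := h4
    linarith
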